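/- Let X be a Banach space and Θ : X → (-∞, ∞] a proper, weakly lower semi-continuous, uniformly convex function. Then Θ has the Kadec property: for any sequence {xₙ} ⊂ X with xₙ ⇀ x weakly and Θ(xₙ) → Θ(x) < ∞, one has xₙ → x strongly. -/

import Mathlib

/-- A proper, weakly lower semi-continuous, uniformly convex function on a Banach space
has the Kadec property. -/
theorem uniformly_convex_kadec {X : Type*} [NormedAddCommGroup X] [NormedSpace ℝ X]
    [CompleteSpace X]
    (Θ : X → ℝ) (h : ℝ → ℝ) (hcont : Continuous h)
    (hnonneg : ∀ t, 0 ≤ t → 0 ≤ h t)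
    (hzero : ∀ t, 0 ≤ t → h t = 0 → t = 0)
    (huc : ∀ xb x : X, ∀ l : ℝ, 0 < l → l < 1 →
      Θ (l • xb + (1 - l) • x) + l * (1 - l) * h ‖xb - x‖ ≤ l * Θ xb + (1 - l) * Θ x)
    (hwlsc : ∀ (u : ℕ → X) (z : X),
      (∀ f : StrongDual ℝ X,
        Filter.Tendsto (fun n => f (u n)) Filter.atTop (nhds (f z))) →
      Θ z ≤ Filter.liminf (fun n => Θ (u n)) Filter.atTop)
    (x : X) (u : ℕ → X)
    (hweak : ∀ f : StrongDual ℝ X,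
      Filter.Tendsto (fun n => f (u n)) Filter.atTop (nhds (f x)))
    (hval : Filter.Tendsto (fun n => Θ (u n)) Filter.atTop (nhds (Θ x))) :
    Filter.Tendsto u Filter.atTop (nhds x) := by
  rcases subsingleton_or_nontrivial X with hX | hX
  · have : u = fun _ => x := funext fun n => Subsingleton.elim _ _
    rw [this]
    exact tendsto_const_nhds
  set t : ℕ → ℝ := fun n => ‖u n - x‖ with ht
  have htnn : ∀ n, 0 ≤ t n := fun n => norm_nonneg _
  -- Step 1: boundedness of the sequence via Banach–Steinhaus
  obtain ⟨C, hC⟩ : ∃ C, ∀ n, ‖u n‖ ≤ C := by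
    have hb : ∀ f : StrongDual ℝ X, ∃ C, ∀ n,
        ‖(NormedSpace.inclusionInDoubleDual ℝ X (u n)) f‖ ≤ C := by
      intro f
      have h1 : Filter.Tendsto (fun n => ‖f (u n)‖) Filter.atTop (nhds ‖f x‖) :=
        (hweak f).norm
      obtain ⟨C, hC⟩ := h1.bddAbove_range
      exact ⟨C, fun n => by
        simpa [NormedSpace.inclusionInDoubleDual] using hC ⟨n, rfl⟩⟩
    obtain ⟨C', hC'⟩ := banach_steinhaus hb
    refine ⟨C', fun n => ?_⟩
    have h0 : (0:ℝ) ≤ C' := le_trans (norm_nonneg _) (hC' 0)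
    refine NormedSpace.norm_le_dual_bound ℝ (u n) h0 (fun f => ?_)
    calc ‖f (u n)‖ = ‖(NormedSpace.inclusionInDoubleDual ℝ X (u n)) f‖ := by
            simp [NormedSpace.inclusionInDoubleDual]
      _ ≤ ‖NormedSpace.inclusionInDoubleDual ℝ X (u n)‖ * ‖f‖ :=
            (NormedSpace.inclusionInDoubleDual ℝ X (u n)).le_opNorm f
      _ ≤ C' * ‖f‖ := by
            exact mul_le_mul_of_nonneg_right (hC' n) (norm_nonneg f)
  have htM : ∀ n, t n ≤ C + ‖x‖ := fun n =>
    le_trans (norm_sub_le _ _) (add_le_add_left (hC n) _)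
  -- midpoints
  set v : ℕ → X := fun n => (1/2 : ℝ) • u n + (1 - 1/2 : ℝ) • x with hv
  have hvweak : ∀ f : StrongDual ℝ X,
      Filter.Tendsto (fun n => f (v n)) Filter.atTop (nhds (f x)) := by
    intro f
    have : Filter.Tendsto (fun n => (1/2 : ℝ) * f (u n) + (1 - 1/2 : ℝ) * f x)
        Filter.atTop (nhds ((1/2 : ℝ) * f x + (1 - 1/2 : ℝ) * f x)) :=
      (((hweak f).const_mul _).add tendsto_const_nhds)
    simp only [hv, map_add, map_smul, smul_eq_mul]
    convert this using 2
    ring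
  have hliminf : Θ x ≤ Filter.liminf (fun n => Θ (v n)) Filter.atTop :=
    hwlsc v x hvweak
  have hkey : ∀ n, Θ (v n) + (1/2 : ℝ) * (1 - 1/2) * h (t n)
      ≤ (1/2 : ℝ) * Θ (u n) + (1 - 1/2 : ℝ) * Θ x := by
    intro n
    exact huc (u n) x (1/2) (by norm_num) (by norm_num)
  -- Dichotomy: Θ ∘ v bounded below or not
  by_cases hbdd : Filter.IsBoundedUnder (· ≥ ·) Filter.atTop (fun n => Θ (v n))
  · -- Step 2: h (t n) → 0
    have htend0 : Filter.Tendsto (fun n => h (t n)) Filter.atTop (nhds 0) := by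
      rw [Metric.tendsto_atTop]
      intro ε hε
      have hε6 : 0 < ε / 6 := by linarith
      have ev1 : ∀ᶠ n in Filter.atTop, Θ (u n) < Θ x + ε / 6 :=
        hval.eventually_lt_const (by linarith)
      have ev2 : ∀ᶠ n in Filter.atTop, Θ x - ε / 6 < Θ (v n) :=
        Filter.eventually_lt_of_lt_liminf (lt_of_lt_of_le (by linarith) hliminf) hbdd
      obtain ⟨N, hN⟩ := Filter.eventually_atTop.1 (ev1.and ev2)
      refine ⟨N, fun n hn => ?_⟩
      obtain ⟨h1, h2⟩ := hN n hn
      have h3 := hkey n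
      have h0 := hnonneg (t n) (htnn n)
      rw [Real.dist_eq, sub_zero, abs_of_nonneg h0]
      nlinarith
    -- Step 3: t n → 0 via compactness
    rw [tendsto_iff_norm_sub_tendsto_zero]
    by_contra hcon
    rw [Metric.tendsto_atTop] at hcon
    push_neg at hcon
    obtain ⟨ε, hε, hfreq⟩ := hcon
    have hεt : ∀ N, ∃ n ≥ N, ε ≤ t n := by
      intro N
      obtain ⟨n, hn, hd⟩ := hfreq N
      refine ⟨n, hn, ?_⟩
      rwa [Real.dist_eq, sub_zero, abs_of_nonneg (htnn n)] at hd
    have hεM : ε ≤ C + ‖x‖ := by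
      obtain ⟨n, _, hn⟩ := hεt 0
      exact le_trans hn (htM n)
    have hKne : (Set.Icc ε (C + ‖x‖)).Nonempty := ⟨ε, le_refl ε, hεM⟩
    obtain ⟨a, haK, ha⟩ := isCompact_Icc.exists_isMinOn hKne hcont.continuousOn
    have hapos : 0 < h a := by
      rcases lt_or_eq_of_le (hnonneg a (le_trans hε.le haK.1)) with h1 | h1
      · exact h1
      · exact absurd (hzero a (le_trans hε.le haK.1) h1.symm)
          (by have := lt_of_lt_of_le hε haK.1; linarith)
    obtain ⟨N, hN⟩ := Filter.eventually_atTop.1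
      (htend0.eventually_lt_const hapos)
    obtain ⟨n, hn, hεn⟩ := hεt N
    have : t n ∈ Set.Icc ε (C + ‖x‖) := ⟨hεn, htM n⟩
    exact absurd (ha this) (not_le.2 (hN n hn))
  · -- Degenerate case: Θ ∘ v unbounded below; then hwlsc forces Θ ≤ 0 everywhere,
    -- which contradicts uniform convexity.
    exfalso
    have hΘle : ∀ z : X, Θ z ≤ 0 := by
      intro z
      set w : X := (2 : ℝ) • z - x with hwdef
      set p : ℕ → X := fun n => (1/2 : ℝ) • v n + (1 - 1/2 : ℝ) • w with hp
      have hpweak : ∀ f : StrongDual ℝ X,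
          Filter.Tendsto (fun n => f (p n)) Filter.atTop (nhds (f z)) := by
        intro f
        have : Filter.Tendsto (fun n => (1/2 : ℝ) * f (v n) + (1 - 1/2 : ℝ) * f w)
            Filter.atTop (nhds ((1/2 : ℝ) * f x + (1 - 1/2 : ℝ) * f w)) :=
          (((hvweak f).const_mul _).add tendsto_const_nhds)
        have hw : f w = 2 * f z - f x := by
          rw [hwdef, map_sub, map_smul]; simp
        simp only [hp, map_add, map_smul, smul_eq_mul]
        convert this using 2
        rw [hw]; ring
      have hple : ∀ n, Θ (p n) ≤ (1/2 : ℝ) * Θ (v n) + (1 - 1/2 : ℝ) * Θ w := by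
        intro n
        have h1 := huc (v n) w (1/2) (by norm_num) (by norm_num)
        have h2 : 0 ≤ h ‖v n - w‖ := hnonneg _ (norm_nonneg _)
        simp only [hp]
        nlinarith
      have hempty : {a : ℝ | ∀ᶠ n in Filter.atTop, a ≤ Θ (p n)} = ∅ := by
        rw [Set.eq_empty_iff_forall_notMem]
        intro a ha
        refine hbdd ⟨2 * a - Θ w, ?_⟩
        rw [Filter.eventually_map]
        filter_upwards [ha] with n hn
        have := hple n
        simp only [ge_iff_le]
        linarith
      have := hwlsc p z hpweak
      rwa [Filter.liminf_eq, hempty, Real.sSup_empty] at this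
    -- growth along a ray contradicts Θ ≤ 0
    obtain ⟨y, hy⟩ := exists_ne (0 : X)
    have hny : 0 < ‖y‖ := norm_pos_iff.2 hy
    set c : ℝ := h (2 * ‖y‖) with hc
    have hcpos : 0 < c := by
      rcases lt_or_eq_of_le (hnonneg (2 * ‖y‖) (by positivity)) with h1 | h1
      · exact h1
      · exact absurd (hzero (2 * ‖y‖) (by positivity) h1.symm) (by positivity)
    set g : ℕ → ℝ := fun n => Θ ((n : ℝ) • y) with hg
    set d : ℕ → ℝ := fun n => g (n + 1) - g n with hd
    clear_value g d c
    have gkey : ∀ n : ℕ, g (n + 1) + (1/4 : ℝ) * c ≤ (1/2 : ℝ) * g (n + 2) + (1/2 : ℝ) * g n := by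
      intro n
      have h1 := huc (((n : ℝ) + 2) • y) ((n : ℝ) • y) (1/2) (by norm_num) (by norm_num)
      have e1 : (1/2 : ℝ) • (((n : ℝ) + 2) • y) + (1 - 1/2 : ℝ) • ((n : ℝ) • y)
          = ((n : ℝ) + 1) • y := by module
      have e2 : ((n : ℝ) + 2) • y - (n : ℝ) • y = (2 : ℝ) • y := by module
      rw [e1, e2] at h1
      have e3 : ‖(2 : ℝ) • y‖ = 2 * ‖y‖ := by
        rw [norm_smul]; simp
      rw [e3] at h1
      simp only [hg]
      push_cast
      nlinarith [h1]
    have hdstep : ∀ n, d n + c / 2 ≤ d (n + 1) := by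
      intro n
      have := gkey n
      simp only [hd]
      have e : (n : ℕ) + 1 + 1 = n + 2 := by ring
      rw [e]
      linarith
    have hdlb : ∀ n : ℕ, d 0 + n * (c / 2) ≤ d n := by
      intro n
      induction n with
      | zero => simp
      | succ k ih =>
        have := hdstep k
        push_cast
        push_cast at ih
        linarith
    obtain ⟨N, hN⟩ := exists_nat_ge ((1 - d 0) / (c / 2))
    have hN1 : 1 ≤ d 0 + N * (c / 2) := by
      rw [div_le_iff₀ (by positivity)] at hN
      linarith
    have hdge1 : ∀ k, N ≤ k → 1 ≤ d k := by
      intro k hk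
      have h1 := hdlb k
      have h2 : (N : ℝ) * (c / 2) ≤ (k : ℝ) * (c / 2) :=
        mul_le_mul_of_nonneg_right (Nat.cast_le.2 hk) (by positivity)
      linarith [hN1, h1, h2]
    have hgrow : ∀ m : ℕ, g N + m ≤ g (N + m) := by
      intro m
      induction m with
      | zero => simp
      | succ k ih =>
        have h1 := hdge1 (N + k) (Nat.le_add_right _ _)
        have h2 : g (N + k + 1) = g (N + k) + d (N + k) := by simp [hd]
        have e : N + (k + 1) = N + k + 1 := by ring
        rw [e, h2]
        push_cast
        push_cast at ih
        linarith
    obtain ⟨m, hm⟩ := exists_nat_gt (1 - g N)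
    have h1 := hgrow m
    have h2 := hΘle (((N + m : ℕ) : ℝ) • y)
    have h3 : g (N + m) ≤ 0 := by simpa [hg] using h2
    push_cast at h1
    linarith
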